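/- Let G be a finite connected simple graph and let H be an isometric subgraph of G. Then for every vertex v of G and all vertices x, y of H, the sets γ(H,x,v) and γ(H,y,v) have a common element, i.e. γ(H,x,v) ∩ γ(H,y,v) ≠ ∅. -/

import Mathlib

/-- A subgraph `H` of `G` is isometric if the distance inside `H`
agrees with the distance in `G` for all pairs of vertices of `H`. -/
def IsIsometricSubgraph {V : Type*} (G : SimpleGraph V) (H : G.Subgraph) : Prop :=
  ∀ x y : H.verts, H.coe.dist x y = G.dist x.1 y.1

/-- `γ(H,x,v) = {y ∈ V(H) : d_G(y,x) ≤ d_G(v,x)}`. -/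
def gammaSet {V : Type*} (G : SimpleGraph V) (H : G.Subgraph) (x v : V) : Set V :=
  {y | y ∈ H.verts ∧ G.dist y x ≤ G.dist v x}

/-- Splitting a walk at position `n`. -/
lemma walk_split {V : Type*} {G : SimpleGraph V} :
    ∀ {u v : V} (p : G.Walk u v) (n : ℕ), ∃ z, ∃ (q1 : G.Walk u z) (q2 : G.Walk z v),
      q1.length = min n p.length ∧ q1.length + q2.length = p.length := by
  intro u v p
  induction p with
  | nil => exact fun n => ⟨_, .nil, .nil, by simp, by simp⟩
  | cons h q ih =>
    intro n
    match n with
    | 0 => exact ⟨_, .nil, .cons h q, by simp, by simp⟩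
    | n + 1 =>
      obtain ⟨z, q1, q2, h1, h2⟩ := ih n
      exact ⟨z, .cons h q1, q2, by simp [h1, Nat.succ_min_succ], by simp; omega⟩

/-- if `G` is a finite connected graph and `H` is a connected isometric
subgraph, then for every `v ∈ V(G)` and all `x, y ∈ V(H)`, the sets `γ(H,x,v)` and
`γ(H,y,v)` intersect. -/
theorem gammaSet_pairwise_intersect {V : Type*} [Fintype V] (G : SimpleGraph V)
    (hG : G.Connected) (H : G.Subgraph) (hHconn : H.Connected)
    (hiso : IsIsometricSubgraph G H) (v : V) (x y : V)
    (hx : x ∈ H.verts) (hy : y ∈ H.verts) :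
    (gammaSet G H x v ∩ gammaSet G H y v).Nonempty := by
  -- shortest walk in H from x to y
  obtain ⟨p, hp⟩ := (hHconn ⟨x, hx⟩ ⟨y, hy⟩).exists_walk_length_eq_dist
  set n := min (G.dist v x) (G.dist x y) with hn
  obtain ⟨z, q1, q2, hq1, hq12⟩ := walk_split p n
  have hplen : p.length = G.dist x y := by
    rw [hp]; exact hiso ⟨x, hx⟩ ⟨y, hy⟩
  have hq1n : q1.length = n := by
    rw [hq1, hplen, hn]; omega
  refine ⟨z.1, ⟨z.2, ?_⟩, ⟨z.2, ?_⟩⟩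
  · calc G.dist z.1 x ≤ (q1.reverse.map H.hom).length := G.dist_le _
      _ = n := by rw [SimpleGraph.Walk.length_map, SimpleGraph.Walk.length_reverse]; exact hq1n
      _ ≤ G.dist v x := min_le_left _ _
  · have hq2 : q2.length = G.dist x y - n := by omega
    calc G.dist z.1 y ≤ (q2.map H.hom).length := G.dist_le _
      _ = G.dist x y - n := by rw [SimpleGraph.Walk.length_map]; exact hq2
      _ ≤ G.dist v y := by
          have ht : G.dist x y ≤ G.dist x v + G.dist v y := hG.dist_triangle
          have hc : G.dist x v = G.dist v x := G.dist_comm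
          omega
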